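/- In the operator dynamical system dU_i/dt = C_m U_i + U_i C_n (where C_m = s I_m − m∑_j U_j U_j^T and C_n = s I_n − n∑_j U_j^T U_j), the quantity Δ = (1/m)tr(C_m²) + (1/n)tr(C_n²) satisfies dΔ/dt = −4 ∑_{i=1}^k ‖dU_i/dt‖_F². In particular, Δ is non-increasing over time. -/

import Mathlib

open Matrix BigOperators

section Aux

/-- Entrywise derivative predicate for matrix-valued curves. -/
def HDm {m n : ℕ} (f : ℝ → Matrix (Fin m) (Fin n) ℝ) (f' : Matrix (Fin m) (Fin n) ℝ)
    (t : ℝ) : Prop :=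
  ∀ a b, HasDerivAt (fun τ => f τ a b) (f' a b) t

variable {m n p k : ℕ} {t : ℝ}

lemma HDm.matmul {f : ℝ → Matrix (Fin m) (Fin n) ℝ} {g : ℝ → Matrix (Fin n) (Fin p) ℝ}
    {f' g'} (hf : HDm f f' t) (hg : HDm g g' t) :
    HDm (fun τ => f τ * g τ) (f' * g t + f t * g') t := by
  intro a b
  simp only [Matrix.mul_apply, Matrix.add_apply]
  rw [← Finset.sum_add_distrib]
  exact HasDerivAt.fun_sum fun c _ => (hf a c).mul (hg c b)

lemma HDm.transpose {f : ℝ → Matrix (Fin m) (Fin n) ℝ} {f'}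
    (hf : HDm f f' t) : HDm (fun τ => (f τ)ᵀ) f'ᵀ t := fun a b => hf b a

lemma HDm.sum {f : Fin k → ℝ → Matrix (Fin m) (Fin n) ℝ}
    {f' : Fin k → Matrix (Fin m) (Fin n) ℝ}
    (hf : ∀ i, HDm (f i) (f' i) t) :
    HDm (fun τ => ∑ i, f i τ) (∑ i, f' i) t := by
  intro a b
  simp only [Finset.sum_apply, Matrix.sum_apply]
  exact HasDerivAt.fun_sum fun i _ => hf i a b

lemma HDm.sub {f g : ℝ → Matrix (Fin m) (Fin n) ℝ} {f' g'}
    (hf : HDm f f' t) (hg : HDm g g' t) :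
    HDm (fun τ => f τ - g τ) (f' - g') t := fun a b => (hf a b).sub (hg a b)

lemma HDm.const_smul (r : ℝ) {f : ℝ → Matrix (Fin m) (Fin n) ℝ} {f'}
    (hf : HDm f f' t) : HDm (fun τ => r • f τ) (r • f') t := by
  intro a b
  simpa [smul_eq_mul] using (hf a b).const_mul r

lemma HDm.smul_const {c : ℝ → ℝ} {c' : ℝ} (hc : HasDerivAt c c' t)
    (A : Matrix (Fin m) (Fin n) ℝ) :
    HDm (fun τ => c τ • A) (c' • A) t := by
  intro a b
  simpa [smul_eq_mul, mul_comm] using hc.mul_const (A a b)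

lemma HDm.trace {f : ℝ → Matrix (Fin m) (Fin m) ℝ} {f'}
    (hf : HDm f f' t) : HasDerivAt (fun τ => (f τ).trace) f'.trace t := by
  simp only [Matrix.trace, Matrix.diag]
  exact HasDerivAt.fun_sum fun a _ => hf a a

lemma tr_symm_swap (C : Matrix (Fin m) (Fin m) ℝ) (hC : Cᵀ = C)
    (X Y : Matrix (Fin m) (Fin n) ℝ) :
    (C * (X * Yᵀ)).trace = (C * (Y * Xᵀ)).trace := by
  conv_lhs => rw [← Matrix.trace_transpose, Matrix.transpose_mul, Matrix.transpose_mul,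
    Matrix.transpose_transpose, hC]
  rw [← Matrix.mul_assoc, Matrix.trace_mul_cycle, Matrix.mul_assoc]

lemma tr_cyc (C : Matrix (Fin n) (Fin n) ℝ) (X Y : Matrix (Fin m) (Fin n) ℝ) :
    (C * (Yᵀ * X)).trace = (X * C * Yᵀ).trace := by
  rw [← Matrix.mul_assoc, Matrix.trace_mul_cycle]

lemma tr_cyc2 (C : Matrix (Fin n) (Fin n) ℝ) (hC : Cᵀ = C) (X Y : Matrix (Fin m) (Fin n) ℝ) :
    (C * (Xᵀ * Y)).trace = (X * C * Yᵀ).trace := by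
  conv_lhs => rw [← Matrix.trace_transpose, Matrix.transpose_mul, Matrix.transpose_mul,
    Matrix.transpose_transpose, hC]
  rw [Matrix.trace_mul_cycle, Matrix.trace_mul_cycle]

lemma key_identity (hm : 0 < m) (hn : 0 < n) (U V : Fin k → Matrix (Fin m) (Fin n) ℝ)
    (s s' : ℝ) (Cm Cm' : Matrix (Fin m) (Fin m) ℝ) (Cn Cn' : Matrix (Fin n) (Fin n) ℝ)
    (hs : s = (∑ i, U i * (U i)ᵀ).trace)
    (hCm : Cm = s • 1 - (m : ℝ) • ∑ i, U i * (U i)ᵀ)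
    (hCn : Cn = s • 1 - (n : ℝ) • ∑ i, (U i)ᵀ * U i)
    (hV : ∀ i, V i = Cm * U i + U i * Cn)
    (hCm' : Cm' = s' • 1 - (m : ℝ) • ∑ i, (V i * (U i)ᵀ + U i * (V i)ᵀ))
    (hCn' : Cn' = s' • 1 - (n : ℝ) • ∑ i, ((V i)ᵀ * U i + (U i)ᵀ * V i)) :
    (1 / (m : ℝ)) * (Cm' * Cm + Cm * Cm').trace
      + (1 / (n : ℝ)) * (Cn' * Cn + Cn * Cn').trace
      = -4 * ∑ i, (V i * (V i)ᵀ).trace := by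
  have hCmT : Cmᵀ = Cm := by
    rw [hCm]
    simp [Matrix.transpose_smul, Matrix.transpose_sub, Matrix.transpose_sum,
      Matrix.transpose_mul, Matrix.transpose_transpose]
  have hCnT : Cnᵀ = Cn := by
    rw [hCn]
    simp [Matrix.transpose_smul, Matrix.transpose_sub, Matrix.transpose_sum,
      Matrix.transpose_mul, Matrix.transpose_transpose]
  have htrCm : Cm.trace = 0 := by
    rw [hCm, Matrix.trace_sub, Matrix.trace_smul, Matrix.trace_smul, Matrix.trace_one, hs]
    simp [smul_eq_mul, Fintype.card_fin]
    ring
  have htrCn : Cn.trace = 0 := by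
    have h2 : (∑ i, (U i)ᵀ * U i).trace = (∑ i, U i * (U i)ᵀ).trace := by
      rw [Matrix.trace_sum, Matrix.trace_sum]
      exact Finset.sum_congr rfl fun i _ => Matrix.trace_mul_comm _ _
    rw [hCn, Matrix.trace_sub, Matrix.trace_smul, Matrix.trace_smul, Matrix.trace_one, h2, hs]
    simp [smul_eq_mul, Fintype.card_fin]
    ring
  have h1 : (Cm * Cm').trace
      = -(m : ℝ) * (Cm * ∑ i, (V i * (U i)ᵀ + U i * (V i)ᵀ)).trace := by
    rw [hCm', Matrix.mul_sub, Matrix.mul_smul, Matrix.mul_smul, Matrix.mul_one,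
      Matrix.trace_sub, Matrix.trace_smul, Matrix.trace_smul, htrCm]
    simp [smul_eq_mul]
  have h2 : (Cn * Cn').trace
      = -(n : ℝ) * (Cn * ∑ i, ((V i)ᵀ * U i + (U i)ᵀ * V i)).trace := by
    rw [hCn', Matrix.mul_sub, Matrix.mul_smul, Matrix.mul_smul, Matrix.mul_one,
      Matrix.trace_sub, Matrix.trace_smul, Matrix.trace_smul, htrCn]
    simp [smul_eq_mul]
  have h3 : (Cm * ∑ i, (V i * (U i)ᵀ + U i * (V i)ᵀ)).trace
      = 2 * ∑ i, (Cm * U i * (V i)ᵀ).trace := by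
    rw [Finset.mul_sum, Matrix.trace_sum, Finset.mul_sum]
    congr 1; funext i
    rw [Matrix.mul_add, Matrix.trace_add, tr_symm_swap Cm hCmT (V i) (U i),
      ← Matrix.mul_assoc]
    ring
  have h4 : (Cn * ∑ i, ((V i)ᵀ * U i + (U i)ᵀ * V i)).trace
      = 2 * ∑ i, (U i * Cn * (V i)ᵀ).trace := by
    rw [Finset.mul_sum, Matrix.trace_sum, Finset.mul_sum]
    congr 1; funext i
    rw [Matrix.mul_add, Matrix.trace_add, tr_cyc Cn (U i) (V i),
      tr_cyc2 Cn hCnT (U i) (V i)]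
    ring
  have h5 : ∀ i, (V i * (V i)ᵀ).trace
      = (Cm * U i * (V i)ᵀ).trace + (U i * Cn * (V i)ᵀ).trace := by
    intro i
    rw [hV i, Matrix.add_mul, Matrix.trace_add]
  have hcomm1 : (Cm' * Cm).trace = (Cm * Cm').trace := Matrix.trace_mul_comm _ _
  have hcomm2 : (Cn' * Cn).trace = (Cn * Cn').trace := Matrix.trace_mul_comm _ _
  rw [Matrix.trace_add, Matrix.trace_add, hcomm1, hcomm2, h1, h2, h3, h4]
  simp only [h5, Finset.sum_add_distrib]
  have hm' : (m : ℝ) ≠ 0 := Nat.cast_ne_zero.mpr hm.ne'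
  have hn' : (n : ℝ) ≠ 0 := Nat.cast_ne_zero.mpr hn.ne'
  field_simp
  ring

end Aux

/-- In the operator dynamical system `dUᵢ/dt = Cₘ Uᵢ + Uᵢ Cₙ`, the quantity
`Δ = (1/m) tr(Cₘ²) + (1/n) tr(Cₙ²)` satisfies `dΔ/dt = -4 ∑ᵢ ‖dUᵢ/dt‖_F²`;
in particular Δ is non-increasing over time. -/
theorem opDelta_deriv {k m n : ℕ} (hm : 0 < m) (hn : 0 < n)
    (U : ℝ → Fin k → Matrix (Fin m) (Fin n) ℝ)
    (s Δ : ℝ → ℝ)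
    (Cm : ℝ → Matrix (Fin m) (Fin m) ℝ) (Cn : ℝ → Matrix (Fin n) (Fin n) ℝ)
    (hs : ∀ t, s t = (∑ i, U t i * (U t i)ᵀ).trace)
    (hCm : ∀ t, Cm t = s t • (1 : Matrix (Fin m) (Fin m) ℝ) - (m : ℝ) • ∑ i, U t i * (U t i)ᵀ)
    (hCn : ∀ t, Cn t = s t • (1 : Matrix (Fin n) (Fin n) ℝ) - (n : ℝ) • ∑ i, (U t i)ᵀ * U t i)
    (hΔ : ∀ t, Δ t = (1 / (m : ℝ)) * ((Cm t ^ 2).trace) + (1 / (n : ℝ)) * ((Cn t ^ 2).trace))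
    (hode : ∀ t i a b,
      HasDerivAt (fun τ => U τ i a b) ((Cm t * U t i + U t i * Cn t) a b) t) :
    (∀ t, HasDerivAt Δ
      (-4 * ∑ i, ∑ a, ∑ b, ((Cm t * U t i + U t i * Cn t) a b) ^ 2) t) ∧ Antitone Δ := by
  have main : ∀ t, HasDerivAt Δ
      (-4 * ∑ i, ∑ a, ∑ b, ((Cm t * U t i + U t i * Cn t) a b) ^ 2) t := by
    intro t
    set V : Fin k → Matrix (Fin m) (Fin n) ℝ := fun i => Cm t * U t i + U t i * Cn t with hV
    have hU : ∀ i, HDm (fun τ => U τ i) (V i) t := fun i a b => hode t i a b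
    -- derivative of B_m
    have hB : HDm (fun τ => ∑ i, U τ i * (U τ i)ᵀ)
        (∑ i, (V i * (U t i)ᵀ + U t i * (V i)ᵀ)) t :=
      HDm.sum fun i => (hU i).matmul (hU i).transpose
    have hBn : HDm (fun τ => ∑ i, (U τ i)ᵀ * U τ i)
        (∑ i, ((V i)ᵀ * U t i + (U t i)ᵀ * V i)) t :=
      HDm.sum fun i => (hU i).transpose.matmul (hU i)
    -- derivative of s
    have hsfun : s = fun τ => (∑ i, U τ i * (U τ i)ᵀ).trace := funext hs
    have hds : HasDerivAt s (∑ i, (V i * (U t i)ᵀ + U t i * (V i)ᵀ)).trace t := by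
      rw [hsfun]; exact hB.trace
    set s' : ℝ := (∑ i, (V i * (U t i)ᵀ + U t i * (V i)ᵀ)).trace with hs'
    set Cm' : Matrix (Fin m) (Fin m) ℝ :=
      s' • 1 - (m : ℝ) • ∑ i, (V i * (U t i)ᵀ + U t i * (V i)ᵀ) with hCm'
    set Cn' : Matrix (Fin n) (Fin n) ℝ :=
      s' • 1 - (n : ℝ) • ∑ i, ((V i)ᵀ * U t i + (U t i)ᵀ * V i) with hCn'
    have hdCm : HDm Cm Cm' t := by
      have hCmfun : Cm = fun τ =>
          s τ • (1 : Matrix (Fin m) (Fin m) ℝ) - (m : ℝ) • ∑ i, U τ i * (U τ i)ᵀ :=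
        funext hCm
      rw [hCmfun, hCm']
      exact (HDm.smul_const hds 1).sub (HDm.const_smul _ hB)
    have hdCn : HDm Cn Cn' t := by
      have hCnfun : Cn = fun τ =>
          s τ • (1 : Matrix (Fin n) (Fin n) ℝ) - (n : ℝ) • ∑ i, (U τ i)ᵀ * U τ i :=
        funext hCn
      rw [hCnfun, hCn']
      exact (HDm.smul_const hds 1).sub (HDm.const_smul _ hBn)
    have hTrm : HasDerivAt (fun τ => ((Cm τ) ^ 2).trace)
        ((Cm' * Cm t + Cm t * Cm').trace) t := by
      have h := (hdCm.matmul hdCm).trace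
      simpa [sq] using h
    have hTrn : HasDerivAt (fun τ => ((Cn τ) ^ 2).trace)
        ((Cn' * Cn t + Cn t * Cn').trace) t := by
      have h := (hdCn.matmul hdCn).trace
      simpa [sq] using h
    have hΔfun : Δ = fun τ =>
        (1 / (m : ℝ)) * ((Cm τ ^ 2).trace) + (1 / (n : ℝ)) * ((Cn τ ^ 2).trace) :=
      funext hΔ
    have hD : HasDerivAt Δ
        ((1 / (m : ℝ)) * (Cm' * Cm t + Cm t * Cm').trace
          + (1 / (n : ℝ)) * (Cn' * Cn t + Cn t * Cn').trace) t := by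
      rw [hΔfun]
      exact (hTrm.const_mul _).add (hTrn.const_mul _)
    have hval : (1 / (m : ℝ)) * (Cm' * Cm t + Cm t * Cm').trace
          + (1 / (n : ℝ)) * (Cn' * Cn t + Cn t * Cn').trace
        = -4 * ∑ i, (V i * (V i)ᵀ).trace :=
      key_identity hm hn (U t) V (s t) s' (Cm t) Cm' (Cn t) Cn'
        (hs t) (hCm t) (hCn t) (fun i => rfl) hCm' hCn'
    have hfrob : ∀ i, (V i * (V i)ᵀ).trace = ∑ a, ∑ b, (V i a b) ^ 2 := by
      intro i
      simp [Matrix.trace, Matrix.diag, Matrix.mul_apply, sq]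
    rw [hval] at hD
    simp only [hfrob] at hD
    exact hD
  refine ⟨main, ?_⟩
  apply antitone_of_deriv_nonpos
  · intro t
    exact (main t).differentiableAt
  · intro t
    rw [(main t).deriv]
    have hnn : (0 : ℝ) ≤ ∑ i, ∑ a, ∑ b, ((Cm t * U t i + U t i * Cn t) a b) ^ 2 := by
      positivity
    nlinarith
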